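/- arXiv:1711.06641 — 10 statements merged into one kernel-verified Lean document; each statement's English description precedes it below -/
import Mathlib

section
/- The set S₀ = {c ∈ C : 2·s(c) > n} of candidates approved by a strict majority of the voters is a NAV-winning committee, and every NAV-winning committee contains S₀; consequently S₀ is the unique smallest winning committee under the NAV rule. -/
open Finset

/-- The set `S₀` of candidates approved by a strict majority of the voters is a NAV-winning
committee, every NAV-winning committee contains it, and hence it is the unique smallest
NAV-winning committee. -/
theorem nav_smallest_winning {C : Type*} [Fintype C] [DecidableEq C]
    (n : ℕ) (v : Fin n → Finset C)
    (S₀ : Finset C)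
    (hS₀ : S₀ = Finset.univ.filter
      (fun c : C => n < 2 * (Finset.univ.filter (fun i : Fin n => c ∈ v i)).card)) :
    (∀ T : Finset C,
        (∑ i : Fin n, (((T ∩ v i).card : ℤ) - ((T ∩ (v i)ᶜ).card : ℤ)))
          ≤ (∑ i : Fin n, (((S₀ ∩ v i).card : ℤ) - ((S₀ ∩ (v i)ᶜ).card : ℤ))))
    ∧ (∀ S : Finset C,
        (∀ T : Finset C,
          (∑ i : Fin n, (((T ∩ v i).card : ℤ) - ((T ∩ (v i)ᶜ).card : ℤ)))
            ≤ (∑ i : Fin n, (((S ∩ v i).card : ℤ) - ((S ∩ (v i)ᶜ).card : ℤ)))) →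
        S₀ ⊆ S)
    ∧ (∀ S : Finset C,
        (∀ T : Finset C,
          (∑ i : Fin n, (((T ∩ v i).card : ℤ) - ((T ∩ (v i)ᶜ).card : ℤ)))
            ≤ (∑ i : Fin n, (((S ∩ v i).card : ℤ) - ((S ∩ (v i)ᶜ).card : ℤ)))) →
        S ≠ S₀ → S₀.card < S.card) := by
  set w : C → ℤ := fun c =>
    2 * ((Finset.univ.filter (fun i : Fin n => c ∈ v i)).card : ℤ) - n with hw
  -- The NAV score of S equals ∑_{c ∈ S} w c.
  have key : ∀ S : Finset C,
      (∑ i : Fin n, (((S ∩ v i).card : ℤ) - ((S ∩ (v i)ᶜ).card : ℤ))) = ∑ c ∈ S, w c := by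
    intro S
    have hterm : ∀ i : Fin n,
        (((S ∩ v i).card : ℤ) - ((S ∩ (v i)ᶜ).card : ℤ)) =
          2 * ((S ∩ v i).card : ℤ) - (S.card : ℤ) := by
      intro i
      have h : (S ∩ v i).card + (S ∩ (v i)ᶜ).card = S.card := by
        have e : S ∩ (v i)ᶜ = S \ v i := by
          ext c; simp [Finset.mem_sdiff]
        rw [e, Finset.card_inter_add_card_sdiff]
      have h' : ((S ∩ v i).card : ℤ) + ((S ∩ (v i)ᶜ).card : ℤ) = (S.card : ℤ) := by
        exact_mod_cast h
      linarith
    rw [Finset.sum_congr rfl (fun i _ => hterm i)]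
    have hswap : ∑ i : Fin n, ((S ∩ v i).card : ℤ) =
        ∑ c ∈ S, ((Finset.univ.filter (fun i : Fin n => c ∈ v i)).card : ℤ) := by
      have h1 : ∀ i : Fin n, ((S ∩ v i).card : ℤ) =
          ∑ c ∈ S, (if c ∈ v i then (1 : ℤ) else 0) := by
        intro i
        have e : (S ∩ v i).card = ∑ c ∈ S, (if c ∈ v i then 1 else 0) := by
          rw [← Finset.card_filter]
          congr 1
        rw [e]
        push_cast
        rfl
      have h2 : ∀ c : C, ((Finset.univ.filter (fun i : Fin n => c ∈ v i)).card : ℤ) =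
          ∑ i : Fin n, (if c ∈ v i then (1 : ℤ) else 0) := by
        intro c
        rw [Finset.card_filter]
        push_cast
        rfl
      simp only [h1, h2]
      exact Finset.sum_comm
    rw [Finset.sum_sub_distrib, ← Finset.mul_sum, hswap, Finset.sum_const,
      Finset.mul_sum, hw]
    simp [Finset.sum_sub_distrib, Finset.mul_sum, mul_comm]
  -- membership of S₀ in terms of w
  have hmem : ∀ c : C, c ∈ S₀ ↔ 0 < w c := by
    intro c
    rw [hS₀]
    simp only [Finset.mem_filter, Finset.mem_univ, true_and, hw]
    constructor
    · intro h; have : (n : ℤ) < 2 * ((Finset.univ.filter (fun i : Fin n => c ∈ v i)).card : ℤ) := by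
        exact_mod_cast h
      linarith
    · intro h
      have : (n : ℤ) < 2 * ((Finset.univ.filter (fun i : Fin n => c ∈ v i)).card : ℤ) := by
        linarith
      exact_mod_cast this
  -- S₀ is winning
  have hwin : ∀ T : Finset C, ∑ c ∈ T, w c ≤ ∑ c ∈ S₀, w c := by
    intro T
    have hsplit : ∑ c ∈ T, w c = ∑ c ∈ T ∩ S₀, w c + ∑ c ∈ T \ S₀, w c := by
      rw [Finset.sum_inter_add_sum_sdiff]
    have h1 : ∑ c ∈ T \ S₀, w c ≤ 0 := by
      apply Finset.sum_nonpos
      intro c hc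
      have := (Finset.mem_sdiff.mp hc).2
      have := (hmem c).not.mp this
      linarith [not_lt.mp this]
    have h2 : ∑ c ∈ T ∩ S₀, w c ≤ ∑ c ∈ S₀, w c := by
      apply Finset.sum_le_sum_of_subset_of_nonneg (Finset.inter_subset_right)
      intro c hc _
      exact le_of_lt ((hmem c).mp hc)
    linarith
  refine ⟨fun T => by rw [key, key]; exact hwin T, ?_, ?_⟩
  · -- every winning committee contains S₀
    intro S hSwin c hc
    by_contra hcS
    have h := hSwin (insert c S)
    rw [key, key, Finset.sum_insert hcS] at h
    have := (hmem c).mp hc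
    linarith
  · intro S hSwin hne
    have hsub : S₀ ⊆ S := by
      intro c hc
      by_contra hcS
      have h := hSwin (insert c S)
      rw [key, key, Finset.sum_insert hcS] at h
      have := (hmem c).mp hc
      linarith
    exact Finset.card_lt_card (lt_of_le_of_ne hsub (Ne.symm hne))
end

section
/- Let α and β be nonnegative integers, not both zero, and define the (α,β)-NAV score of a committee S ⊆ C to be Σ_{i=1}^{n} (α·|S ∩ v_i| − β·|S ∩ v̄_i|). Then the (α,β)-NAV score of S equals Σ_{c ∈ S} ((α+β)·s(c) − β·n), and S maximizes the (α,β)-NAV score over all subsets of C if and only if {c ∈ C : (α+β)·s(c) > β·n} ⊆ S ⊆ {c ∈ C : (α+β)·s(c) ≥ β·n}; in particular, for each candidate c the decision whether c may or must belong to a winning committee depends only on the approvals for c. -/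
open Finset

lemma nav_max_iff {C : Type*} [Fintype C] [DecidableEq C] (w : C → ℤ) (S : Finset C) :
    (∀ T : Finset C, ∑ c ∈ T, w c ≤ ∑ c ∈ S, w c) ↔
      (Finset.univ.filter (fun c => 0 < w c) ⊆ S ∧
        S ⊆ Finset.univ.filter (fun c => 0 ≤ w c)) := by
  constructor
  · intro hmax
    constructor
    · intro c hc
      simp only [mem_filter, mem_univ, true_and] at hc
      by_contra hcS
      have h := hmax (insert c S)
      rw [Finset.sum_insert hcS] at h
      omega
    · intro c hcS
      simp only [mem_filter, mem_univ, true_and]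
      by_contra hneg
      push_neg at hneg
      have h := hmax (S.erase c)
      rw [← Finset.add_sum_erase S w hcS] at h
      omega
  · rintro ⟨h1, h2⟩ T
    have hS : ∑ c ∈ S, w c = ∑ c ∈ Finset.univ.filter (fun c => 0 < w c), w c := by
      rw [← Finset.sum_filter_add_sum_filter_not S (fun c => 0 < w c)]
      have hzero : ∑ c ∈ S.filter (fun c => ¬ 0 < w c), w c = 0 := by
        apply Finset.sum_eq_zero
        intro c hc
        simp only [mem_filter] at hc
        have := h2 hc.1
        simp only [mem_filter, mem_univ, true_and] at this
        omega
      rw [hzero, add_zero]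
      congr 1
      apply Finset.Subset.antisymm
      · intro c hc; simp only [mem_filter] at *; exact ⟨mem_univ c, hc.2⟩
      · intro c hc
        simp only [mem_filter, mem_univ, true_and] at hc
        exact mem_filter.2 ⟨h1 (mem_filter.2 ⟨mem_univ c, hc⟩), hc⟩
    rw [hS]
    calc ∑ c ∈ T, w c ≤ ∑ c ∈ T.filter (fun c => 0 < w c), w c := by
          rw [← Finset.sum_filter_add_sum_filter_not T (fun c => 0 < w c)]
          have : ∑ c ∈ T.filter (fun c => ¬ 0 < w c), w c ≤ 0 := by
            apply Finset.sum_nonpos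
            intro c hc
            simp only [mem_filter] at hc
            omega
          omega
      _ ≤ ∑ c ∈ Finset.univ.filter (fun c => 0 < w c), w c := by
          apply Finset.sum_le_sum_of_subset_of_nonneg
          · intro c hc
            simp only [mem_filter, mem_univ, true_and] at *
            exact hc.2
          · intro c hc _
            simp only [mem_filter, mem_univ, true_and] at hc
            omega

lemma nav_score_eq {C : Type*} [Fintype C] [DecidableEq C]
    (n : ℕ) (v : Fin n → Finset C) (α β : ℕ) (S : Finset C) :
    (∑ i : Fin n, ((α : ℤ) * ((S ∩ v i).card : ℤ) - (β : ℤ) * ((S ∩ (v i)ᶜ).card : ℤ)))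
      = ∑ c ∈ S,
          (((α : ℤ) + (β : ℤ)) *
              ((Finset.univ.filter (fun i : Fin n => c ∈ v i)).card : ℤ)
            - (β : ℤ) * (n : ℤ)) := by
  have key : ∀ i : Fin n,
      (α : ℤ) * ((S ∩ v i).card : ℤ) - (β : ℤ) * ((S ∩ (v i)ᶜ).card : ℤ)
        = ∑ c ∈ S, (if c ∈ v i then (α : ℤ) else -(β : ℤ)) := by
    intro i
    have h1 : S ∩ v i = S.filter (fun c => c ∈ v i) := by ext c; simp
    have h2 : S ∩ (v i)ᶜ = S.filter (fun c => ¬ c ∈ v i) := by ext c; simp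
    rw [h1, h2, Finset.sum_ite, Finset.sum_const, Finset.sum_const]
    push_cast
    ring
  rw [Finset.sum_congr rfl (fun i _ => key i), Finset.sum_comm]
  apply Finset.sum_congr rfl
  intro c _
  rw [Finset.sum_ite, Finset.sum_const, Finset.sum_const]
  have hle : (Finset.univ.filter (fun i : Fin n => c ∈ v i)).card ≤ n := by
    calc (Finset.univ.filter (fun i : Fin n => c ∈ v i)).card
        ≤ (Finset.univ : Finset (Fin n)).card := Finset.card_filter_le _ _
      _ = n := by simp
  have hnot : (Finset.univ.filter (fun i : Fin n => ¬ c ∈ v i)).card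
      = n - (Finset.univ.filter (fun i : Fin n => c ∈ v i)).card := by
    have := Finset.card_filter_add_card_filter_not
      (s := (Finset.univ : Finset (Fin n))) (p := fun i => c ∈ v i)
    simp only [Finset.card_univ, Fintype.card_fin] at this
    omega
  rw [hnot]
  simp only [nsmul_eq_mul]
  rw [Nat.cast_sub hle]
  ring

/-- For linear functions `f(x) = α·x`, `g(x) = β·x` with `α, β` not both zero, the
`(α,β)`-NAV score of `S` equals `∑_{c ∈ S} ((α+β)·s(c) − β·n)`, and `S` maximizes the score
iff `{c : (α+β)·s(c) > β·n} ⊆ S ⊆ {c : (α+β)·s(c) ≥ β·n}`. -/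
theorem linear_nav_winning {C : Type*} [Fintype C] [DecidableEq C]
    (n : ℕ) (v : Fin n → Finset C)
    (α β : ℕ) (hαβ : ¬ (α = 0 ∧ β = 0)) :
    (∀ S : Finset C,
        (∑ i : Fin n, ((α : ℤ) * ((S ∩ v i).card : ℤ) - (β : ℤ) * ((S ∩ (v i)ᶜ).card : ℤ)))
          = ∑ c ∈ S,
              (((α : ℤ) + (β : ℤ)) *
                  ((Finset.univ.filter (fun i : Fin n => c ∈ v i)).card : ℤ)
                - (β : ℤ) * (n : ℤ)))
    ∧ (∀ S : Finset C,
        (∀ T : Finset C,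
          (∑ i : Fin n, ((α : ℤ) * ((T ∩ v i).card : ℤ) - (β : ℤ) * ((T ∩ (v i)ᶜ).card : ℤ)))
            ≤ (∑ i : Fin n,
                ((α : ℤ) * ((S ∩ v i).card : ℤ) - (β : ℤ) * ((S ∩ (v i)ᶜ).card : ℤ))))
        ↔ (Finset.univ.filter
              (fun c : C =>
                β * n < (α + β) * (Finset.univ.filter (fun i : Fin n => c ∈ v i)).card) ⊆ S
            ∧ S ⊆ Finset.univ.filter
              (fun c : C =>
                β * n ≤ (α + β) * (Finset.univ.filter (fun i : Fin n => c ∈ v i)).card))) := by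
  set w : C → ℤ := fun c =>
    ((α : ℤ) + (β : ℤ)) * ((Finset.univ.filter (fun i : Fin n => c ∈ v i)).card : ℤ)
      - (β : ℤ) * (n : ℤ) with hw
  refine ⟨nav_score_eq n v α β, fun S => ?_⟩
  simp only [nav_score_eq n v α β]
  have := nav_max_iff w S
  rw [this]
  have e1 : Finset.univ.filter (fun c => 0 < w c)
      = Finset.univ.filter (fun c : C =>
          β * n < (α + β) * (Finset.univ.filter (fun i : Fin n => c ∈ v i)).card) := by
    apply Finset.filter_congr
    intro c _
    simp only [hw]
    rw [sub_pos, show ((α : ℤ) + (β : ℤ)) = (((α + β : ℕ) : ℤ)) by push_cast; ring,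
      ← Nat.cast_mul, ← Nat.cast_mul, Nat.cast_lt]
  have e2 : Finset.univ.filter (fun c => 0 ≤ w c)
      = Finset.univ.filter (fun c : C =>
          β * n ≤ (α + β) * (Finset.univ.filter (fun i : Fin n => c ∈ v i)).card) := by
    apply Finset.filter_congr
    intro c _
    simp only [hw]
    rw [sub_nonneg, show ((α : ℤ) + (β : ℤ)) = (((α + β : ℕ) : ℤ)) by push_cast; ring,
      ← Nat.cast_mul, ← Nat.cast_mul, Nat.cast_le]
  rw [e1, e2]
end

section
/- Let t₁ : ℕ → ℕ be given by t₁(0) = 0 and t₁(x) = 1 for x ≥ 1. The (0,t₁)-NAV score of a committee S ⊆ C equals −|{i : S ∩ v̄_i ≠ ∅}| and is therefore at most 0; a committee S attains the maximum score 0 if and only if S ⊆ ⋂_{i=1}^{n} v_i, i.e., every member of S is approved by all voters. Consequently the unanimity committee ⋂_{i=1}^{n} v_i is a winning committee under the (0,t₁)-NAV rule and contains every winning committee, so it is the unique largest winning committee (the output of the Unanimity rule UV). -/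
open Finset

/-- The threshold function `t₁`: `t₁ 0 = 0` and `t₁ x = 1` for `x ≥ 1`. -/
def t1 : ℕ → ℕ := fun x => if x = 0 then 0 else 1

lemma score_eq {C : Type*} [Fintype C] [DecidableEq C]
    (n : ℕ) (v : Fin n → Finset C) (S : Finset C) :
    (∑ i : Fin n, ((0 : ℤ) - (t1 ((S ∩ (v i)ᶜ).card) : ℤ)))
      = -((Finset.univ.filter (fun i : Fin n => (S ∩ (v i)ᶜ).Nonempty)).card : ℤ) := by
  rw [Finset.card_filter, Nat.cast_sum, ← Finset.sum_neg_distrib]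
  refine Finset.sum_congr rfl fun i _ => ?_
  by_cases h : (S ∩ (v i)ᶜ).Nonempty
  · have : (S ∩ (v i)ᶜ).card ≠ 0 := by
      simpa [Finset.card_eq_zero, ← Finset.nonempty_iff_ne_empty] using h
    simp [t1, this, h]
  · have : (S ∩ (v i)ᶜ).card = 0 := by
      simp [Finset.card_eq_zero, Finset.not_nonempty_iff_eq_empty.mp h]
    simp [t1, this, h]

lemma zero_iff {C : Type*} [Fintype C] [DecidableEq C]
    (n : ℕ) (v : Fin n → Finset C) (S : Finset C) :
    (∑ i : Fin n, ((0 : ℤ) - (t1 ((S ∩ (v i)ᶜ).card) : ℤ))) = 0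
      ↔ S ⊆ Finset.univ.inf v := by
  rw [score_eq, neg_eq_zero, Nat.cast_eq_zero, Finset.card_eq_zero,
    Finset.filter_eq_empty_iff]
  constructor
  · intro h
    show S ≤ Finset.univ.inf v
    refine Finset.le_inf fun i _ => fun x hx => ?_
    by_contra hxv
    exact h (Finset.mem_univ i) ⟨x, Finset.mem_inter.mpr ⟨hx, Finset.mem_compl.mpr hxv⟩⟩
  · intro h i _ hne
    obtain ⟨x, hx⟩ := hne
    rw [Finset.mem_inter, Finset.mem_compl] at hx
    exact hx.2 ((h.trans (Finset.inf_le (Finset.mem_univ i))) hx.1)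

/-- The `(0,t₁)`-NAV score of `S` equals `−|{i : S ∩ v̄ᵢ ≠ ∅}|`, is at most `0`, is `0` iff
`S ⊆ ⋂ᵢ vᵢ`; hence the unanimity committee `⋂ᵢ vᵢ` is a winning committee and contains every
winning committee. -/
theorem zero_t1_nav_unanimity {C : Type*} [Fintype C] [DecidableEq C]
    (n : ℕ) (v : Fin n → Finset C) :
    (∀ S : Finset C,
        (∑ i : Fin n, ((0 : ℤ) - (t1 ((S ∩ (v i)ᶜ).card) : ℤ)))
          = -((Finset.univ.filter (fun i : Fin n => (S ∩ (v i)ᶜ).Nonempty)).card : ℤ))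
    ∧ (∀ S : Finset C,
        (∑ i : Fin n, ((0 : ℤ) - (t1 ((S ∩ (v i)ᶜ).card) : ℤ))) ≤ 0)
    ∧ (∀ S : Finset C,
        (∑ i : Fin n, ((0 : ℤ) - (t1 ((S ∩ (v i)ᶜ).card) : ℤ))) = 0
          ↔ S ⊆ Finset.univ.inf v)
    ∧ (∀ T : Finset C,
        (∑ i : Fin n, ((0 : ℤ) - (t1 ((T ∩ (v i)ᶜ).card) : ℤ)))
          ≤ (∑ i : Fin n, ((0 : ℤ) - (t1 (((Finset.univ.inf v) ∩ (v i)ᶜ).card) : ℤ))))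
    ∧ (∀ S : Finset C,
        (∀ T : Finset C,
          (∑ i : Fin n, ((0 : ℤ) - (t1 ((T ∩ (v i)ᶜ).card) : ℤ)))
            ≤ (∑ i : Fin n, ((0 : ℤ) - (t1 ((S ∩ (v i)ᶜ).card) : ℤ)))) →
        S ⊆ Finset.univ.inf v) := by
  have hle : ∀ S : Finset C,
      (∑ i : Fin n, ((0 : ℤ) - (t1 ((S ∩ (v i)ᶜ).card) : ℤ))) ≤ 0 := by
    intro S
    rw [score_eq]
    simp
  have hinf : (∑ i : Fin n, ((0 : ℤ) - (t1 (((Finset.univ.inf v) ∩ (v i)ᶜ).card) : ℤ))) = 0 :=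
    (zero_iff n v _).mpr le_rfl
  refine ⟨score_eq n v, hle, zero_iff n v, fun T => by rw [hinf]; exact hle T, fun S h => ?_⟩
  have := h (Finset.univ.inf v)
  rw [hinf] at this
  exact (zero_iff n v S).mp (le_antisymm (hle S) this)
end

section
/- Assume C is nonempty and let M = max_{c ∈ C} s(c) be the largest approval score. Then for every nonempty committee S ⊆ C the number of voters v_i with S ⊆ v_i is at most M, and a nonempty committee S satisfies |{i : S ⊆ v_i}| = M if and only if every candidate in S has approval score M and all candidates in S are approved by exactly the same set of voters. Hence the winning committees under the t_full-Threshold rule (among nonempty committees) are exactly those committees all of whose members have the highest approval score and are approved by the same group of voters. -/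
open Finset

/-- Let `M` be the largest approval score. Every nonempty committee is unanimously approved
(contained in the ballot) by at most `M` voters; equality holds iff every member has approval
score `M` and all members are approved by the same set of voters; hence the nonempty
`t_full`-Threshold winning committees are exactly such committees. -/
theorem t_full_threshold_winning {C : Type*} [Fintype C] [DecidableEq C] [Nonempty C]
    (n : ℕ) (v : Fin n → Finset C) (M : ℕ)
    (hM : M = Finset.univ.sup
      (fun c : C => (Finset.univ.filter (fun i : Fin n => c ∈ v i)).card)) :
    (∀ S : Finset C, S.Nonempty →
        (Finset.univ.filter (fun i : Fin n => S ⊆ v i)).card ≤ M)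
    ∧ (∀ S : Finset C, S.Nonempty →
        ((Finset.univ.filter (fun i : Fin n => S ⊆ v i)).card = M
          ↔ ((∀ c ∈ S, (Finset.univ.filter (fun i : Fin n => c ∈ v i)).card = M)
              ∧ ∀ c ∈ S, ∀ c' ∈ S,
                  (Finset.univ.filter (fun i : Fin n => c ∈ v i))
                    = (Finset.univ.filter (fun i : Fin n => c' ∈ v i)))))
    ∧ (∀ S : Finset C, S.Nonempty →
        ((∀ T : Finset C, T.Nonempty →
            (Finset.univ.filter (fun i : Fin n => T ⊆ v i)).card
              ≤ (Finset.univ.filter (fun i : Fin n => S ⊆ v i)).card)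
          ↔ ((∀ c ∈ S, (Finset.univ.filter (fun i : Fin n => c ∈ v i)).card = M)
              ∧ ∀ c ∈ S, ∀ c' ∈ S,
                  (Finset.univ.filter (fun i : Fin n => c ∈ v i))
                    = (Finset.univ.filter (fun i : Fin n => c' ∈ v i))))) := by
  classical
  have hsub : ∀ S : Finset C, ∀ c ∈ S,
      (Finset.univ.filter (fun i : Fin n => S ⊆ v i)) ⊆
        (Finset.univ.filter (fun i : Fin n => c ∈ v i)) := by
    intro S c hc i hi
    simp only [mem_filter, mem_univ, true_and] at hi ⊢
    exact hi hc
  have hAle : ∀ c : C, (Finset.univ.filter (fun i : Fin n => c ∈ v i)).card ≤ M := by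
    intro c; rw [hM]
    exact Finset.le_sup (f := fun c : C => (Finset.univ.filter (fun i : Fin n => c ∈ v i)).card) (mem_univ c)
  have hbound : ∀ S : Finset C, S.Nonempty →
      (Finset.univ.filter (fun i : Fin n => S ⊆ v i)).card ≤ M := by
    intro S hS
    obtain ⟨c, hc⟩ := hS
    exact (card_le_card (hsub S c hc)).trans (hAle c)
  have hiff : ∀ S : Finset C, S.Nonempty →
      ((Finset.univ.filter (fun i : Fin n => S ⊆ v i)).card = M
        ↔ ((∀ c ∈ S, (Finset.univ.filter (fun i : Fin n => c ∈ v i)).card = M)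
            ∧ ∀ c ∈ S, ∀ c' ∈ S,
                (Finset.univ.filter (fun i : Fin n => c ∈ v i))
                  = (Finset.univ.filter (fun i : Fin n => c' ∈ v i)))) := by
    intro S hS
    constructor
    · intro h
      have key : ∀ c ∈ S, (Finset.univ.filter (fun i : Fin n => S ⊆ v i))
          = (Finset.univ.filter (fun i : Fin n => c ∈ v i)) := by
        intro c hc
        apply Finset.eq_of_subset_of_card_le (hsub S c hc)
        rw [h]; exact hAle c
      refine ⟨fun c hc => by rw [← key c hc, h], fun c hc c' hc' => by
        rw [← key c hc, ← key c' hc']⟩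
    · rintro ⟨h1, h2⟩
      obtain ⟨c0, hc0⟩ := hS
      have : (Finset.univ.filter (fun i : Fin n => S ⊆ v i))
          = (Finset.univ.filter (fun i : Fin n => c0 ∈ v i)) := by
        apply Finset.Subset.antisymm (hsub S c0 hc0)
        intro i hi
        simp only [mem_filter, mem_univ, true_and] at hi ⊢
        intro c hc
        have := h2 c hc c0 hc0
        have hmem : i ∈ Finset.univ.filter (fun i : Fin n => c ∈ v i) := by
          rw [this]; simp [hi]
        simpa using hmem
      rw [this]; exact h1 c0 hc0
  refine ⟨hbound, hiff, ?_⟩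
  intro S hS
  obtain ⟨cstar, -, hcstar⟩ := Finset.exists_mem_eq_sup Finset.univ univ_nonempty
    (fun c : C => (Finset.univ.filter (fun i : Fin n => c ∈ v i)).card)
  have hsingle : (Finset.univ.filter (fun i : Fin n => ({cstar} : Finset C) ⊆ v i))
      = (Finset.univ.filter (fun i : Fin n => cstar ∈ v i)) := by
    simp [Finset.singleton_subset_iff]
  rw [← hiff S hS]
  constructor
  · intro h
    have h1 := h {cstar} (singleton_nonempty cstar)
    rw [hsingle] at h1
    have : M ≤ (Finset.univ.filter (fun i : Fin n => S ⊆ v i)).card := by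
      rw [hM, ← hcstar] at *; exact h1
    exact le_antisymm (hbound S hS) this
  · intro h T hT
    rw [h]; exact hbound T hT
end

section
/- Let U = {u_1, …, u_n} be a finite set, let 𝒮 = {S_1, …, S_m} be a family of subsets of U, and let k be a positive integer with m > k. Form an election with candidate set C = F ∪ 𝒮, where F = {f_1, …, f_k} is a set of k filler candidates, and with the following k·n + 2 voters: one balancing voter approving exactly F; one balancing voter approving exactly 𝒮; and, for each element u_i ∈ U and each j ∈ {1, …, k}, a voter approving exactly (F \ {f_j}) ∪ {S_ℓ ∈ 𝒮 : u_i ∈ S_ℓ}. Then there exists a nonempty committee S ⊆ C such that every voter v in this election satisfies 2·|S ∩ v| ≥ |S| if and only if there exist at most k sets in 𝒮 whose union is U. -/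
open Finset

/-- Ballot of the first balancing voter: all filler candidates. -/
def fillerBallot (k m : ℕ) : Finset (Fin k ⊕ Fin m) :=
  Finset.univ.image Sum.inl

/-- Ballot of the second balancing voter: all set candidates. -/
def setBallot (k m : ℕ) : Finset (Fin k ⊕ Fin m) :=
  Finset.univ.image Sum.inr

/-- Ballot of the voter associated with element `i` and index `j`: all filler candidates except
`f_j`, together with the set candidates whose sets contain `i`. -/
def elementBallot {n m k : ℕ} (𝒮 : Fin m → Finset (Fin n)) (i : Fin n) (j : Fin k) :
    Finset (Fin k ⊕ Fin m) :=
  ((Finset.univ.filter (fun j' : Fin k => j' ≠ j)).image Sum.inl)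
    ∪ ((Finset.univ.filter (fun ℓ : Fin m => i ∈ 𝒮 ℓ)).image Sum.inr)

lemma union_card {k m : ℕ} (J : Finset (Fin k)) (I : Finset (Fin m)) :
    (J.image Sum.inl ∪ I.image Sum.inr : Finset (Fin k ⊕ Fin m)).card = J.card + I.card := by
  rw [Finset.card_union_of_disjoint, Finset.card_image_of_injective _ Sum.inl_injective,
    Finset.card_image_of_injective _ Sum.inr_injective]
  simp [Finset.disjoint_left]

lemma inter_filler {k m : ℕ} (J : Finset (Fin k)) (I : Finset (Fin m)) :
    (J.image Sum.inl ∪ I.image Sum.inr) ∩ fillerBallot k m = J.image Sum.inl := by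
  ext x; cases x <;> simp [fillerBallot]

lemma inter_set {k m : ℕ} (J : Finset (Fin k)) (I : Finset (Fin m)) :
    (J.image Sum.inl ∪ I.image Sum.inr) ∩ setBallot k m = I.image Sum.inr := by
  ext x; cases x <;> simp [setBallot]

lemma inter_element {n m k : ℕ} (𝒮 : Fin m → Finset (Fin n)) (i : Fin n) (j : Fin k)
    (J : Finset (Fin k)) (I : Finset (Fin m)) :
    (J.image Sum.inl ∪ I.image Sum.inr) ∩ elementBallot 𝒮 i j
      = (J.filter (· ≠ j)).image Sum.inl ∪ (I.filter (fun ℓ => i ∈ 𝒮 ℓ)).image Sum.inr := by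
  ext x; cases x <;> simp [elementBallot]

lemma W_eq {k m : ℕ} (W : Finset (Fin k ⊕ Fin m)) :
    W = (Finset.univ.filter (fun j => Sum.inl j ∈ W)).image Sum.inl
        ∪ (Finset.univ.filter (fun ℓ => Sum.inr ℓ ∈ W)).image Sum.inr := by
  ext x; cases x <;> simp

/-- In the reduced election there is a nonempty committee approved by every voter under the
majority threshold iff there are at most `k` sets in `𝒮` whose union is `U`. -/
theorem t_maj_all_satisfied_iff_set_cover
    (n m k : ℕ) (hk : 0 < k) (hmk : k < m) (𝒮 : Fin m → Finset (Fin n)) :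
    (∃ W : Finset (Fin k ⊕ Fin m), W.Nonempty
        ∧ W.card ≤ 2 * (W ∩ fillerBallot k m).card
        ∧ W.card ≤ 2 * (W ∩ setBallot k m).card
        ∧ (∀ (i : Fin n) (j : Fin k), W.card ≤ 2 * (W ∩ elementBallot 𝒮 i j).card))
      ↔ (∃ I : Finset (Fin m), I.card ≤ k ∧ ∀ u : Fin n, ∃ ℓ ∈ I, u ∈ 𝒮 ℓ) := by
  constructor
  · rintro ⟨W, hne, h1, h2, h3⟩
    set J : Finset (Fin k) := Finset.univ.filter (fun j => Sum.inl j ∈ W) with hJ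
    set I : Finset (Fin m) := Finset.univ.filter (fun ℓ => Sum.inr ℓ ∈ W) with hI
    have hW : W = J.image Sum.inl ∪ I.image Sum.inr := W_eq W
    rw [hW, union_card] at h1 h2 h3
    rw [inter_filler] at h1
    rw [inter_set] at h2
    rw [Finset.card_image_of_injective _ Sum.inl_injective] at h1
    rw [Finset.card_image_of_injective _ Sum.inr_injective] at h2
    have hWcard : 0 < J.card + I.card := by
      have := hne.card_pos
      rw [hW, union_card] at this; exact this
    have hJk : J.card ≤ k := by
      simpa using Finset.card_le_card (Finset.subset_univ J)
    refine ⟨I, by omega, fun u => ?_⟩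
    have hJne : J.Nonempty := Finset.card_pos.mp (by omega)
    obtain ⟨j, hj⟩ := hJne
    have := h3 u j
    rw [inter_element, union_card] at this
    have hfil : (J.filter (· ≠ j)).card = J.card - 1 := by
      have : J.filter (· ≠ j) = J.erase j := by
        ext x; simp [Finset.mem_erase, and_comm]
      rw [this, Finset.card_erase_of_mem hj]
    have hIf : 0 < (I.filter (fun ℓ => u ∈ 𝒮 ℓ)).card := by omega
    obtain ⟨ℓ, hℓ⟩ := Finset.card_pos.mp hIf
    simp only [Finset.mem_filter] at hℓ
    exact ⟨ℓ, hℓ.1, hℓ.2⟩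
  · rintro ⟨I, hIk, hcov⟩
    rcases I.eq_empty_or_nonempty with rfl | hIne
    · -- n must have no elements for element conditions
      refine ⟨{Sum.inl ⟨0, hk⟩, Sum.inr ⟨0, by omega⟩}, ⟨Sum.inl ⟨0, hk⟩, by simp⟩, ?_, ?_, ?_⟩
      · have : ({Sum.inl ⟨0, hk⟩, Sum.inr ⟨0, by omega⟩} : Finset (Fin k ⊕ Fin m))
            ∩ fillerBallot k m = {Sum.inl ⟨0, hk⟩} := by
          ext x; cases x <;> simp [fillerBallot]
        rw [this]; simp
      · have : ({Sum.inl ⟨0, hk⟩, Sum.inr ⟨0, by omega⟩} : Finset (Fin k ⊕ Fin m))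
            ∩ setBallot k m = {Sum.inr ⟨0, by omega⟩} := by
          ext x; cases x <;> simp [setBallot]
        rw [this]; simp
      · intro i j
        obtain ⟨ℓ, hℓ, _⟩ := hcov i
        simp at hℓ
    · obtain ⟨J, -, hJcard⟩ := Finset.exists_subset_card_eq
        (show I.card ≤ (Finset.univ : Finset (Fin k)).card by simpa using hIk)
      refine ⟨J.image Sum.inl ∪ I.image Sum.inr, ?_, ?_, ?_, ?_⟩
      · obtain ⟨ℓ, hℓ⟩ := hIne
        exact ⟨Sum.inr ℓ, by simp [hℓ]⟩
      · rw [union_card, inter_filler, Finset.card_image_of_injective _ Sum.inl_injective]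
        omega
      · rw [union_card, inter_set, Finset.card_image_of_injective _ Sum.inr_injective]
        omega
      · intro i j
        rw [union_card, inter_element, union_card]
        have hfil : J.card - 1 ≤ (J.filter (· ≠ j)).card := by
          have : J.erase j ⊆ J.filter (· ≠ j) := by
            intro x hx; simp only [Finset.mem_erase] at hx; simp [hx.1, hx.2]
          calc J.card - 1 ≤ (J.erase j).card := by
                by_cases hj : j ∈ J
                · rw [Finset.card_erase_of_mem hj]
                · rw [Finset.erase_eq_of_notMem hj]; omega
            _ ≤ _ := Finset.card_le_card this
        have hIf : 0 < (I.filter (fun ℓ => i ∈ 𝒮 ℓ)).card := by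
          obtain ⟨ℓ, hℓ, hmem⟩ := hcov i
          exact Finset.card_pos.mpr ⟨ℓ, by simp [hℓ, hmem]⟩
        have hJne : 0 < J.card := hJcard ▸ hIne.card_pos
        omega
end

section
/- Consider an X3C instance with n > 39 and its reduced election. Then there exists a committee C ⊆ {S_1, …, S_n} whose (f,g)-NAV score is at least 7n if and only if the X3C instance admits an exact cover, i.e., a subfamily C' ⊆ {S_1, …, S_n} such that every element b_i belongs to exactly one member of C'. -/
open Finset

/-- `f(0) = 0` and `f(x) = 4` for `x ≥ 1`. -/
def fX : ℕ → ℤ := fun x => if x = 0 then 0 else 4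

/-- `g(0) = 0`, `g(1) = 1` and `g(x) = 2` for `x ≥ 2`. -/
def gX : ℕ → ℤ := fun x => if x = 0 then 0 else if x = 1 then 1 else 2

/-- Ballot of voter `(i, t)` in the reduced election: for `t ≠ 2` (the two set voters of
element `i`) the candidates `j` with `i ∈ SS j`, and for `t = 2` (the antiset voter of
element `i`) the candidates `j` with `i ∉ SS j`. -/
def x3cBallot {n : ℕ} (SS : Fin n → Finset (Fin n)) (p : Fin n × Fin 3) : Finset (Fin n) :=
  if p.2 = 2 then Finset.univ.filter (fun j => p.1 ∉ SS j)
  else Finset.univ.filter (fun j => p.1 ∈ SS j)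

/-- The `(f,g)`-NAV score of a committee `T` in the reduced election. -/
def x3cScore {n : ℕ} (SS : Fin n → Finset (Fin n)) (T : Finset (Fin n)) : ℤ :=
  ∑ p : Fin n × Fin 3,
    (fX ((T ∩ x3cBallot SS p).card) - gX ((T ∩ (x3cBallot SS p)ᶜ).card))

def HX (k m : ℕ) : ℤ := 2*(fX k - gX (m-k)) + (fX (m-k) - gX k)

lemma HX_zero (m : ℕ) : HX 0 m ≤ 2 := by
  rcases m with _ | _ | m <;> simp [HX, fX, gX]

lemma HX_le_twelve (k m : ℕ) : HX k m ≤ 12 := by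
  have h1 : ∀ x, fX x ≤ 4 := fun x => by unfold fX; split <;> norm_num
  have h2 : ∀ x, 0 ≤ gX x := fun x => by unfold gX; split <;> [norm_num; split <;> norm_num]
  have := h1 k; have := h1 (m-k); have := h2 k; have := h2 (m-k)
  unfold HX; linarith

lemma HX_one (m : ℕ) (hm : 5 ≤ m) : HX 1 m = 7 := by
  have h1 : m - 1 ≠ 0 := by omega
  have h2 : m - 1 ≠ 1 := by omega
  simp [HX, fX, gX, h1, h2]

lemma HX_ne_one (k m : ℕ) (hk : k ≤ 3) (hm : 5 ≤ m) (hne : k ≠ 1) : HX k m ≤ 6 := by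
  have h1 : m - k ≠ 0 := by omega
  have h2 : m - k ≠ 1 := by omega
  have h3 : m ≠ 0 := by omega
  have h4 : m ≠ 1 := by omega
  interval_cases k <;> first | exact absurd rfl hne | simp [HX, fX, gX, h1, h2, h3, h4]

lemma score_eq_s15 {n : ℕ} (SS : Fin n → Finset (Fin n)) (T : Finset (Fin n)) :
    x3cScore SS T =
      ∑ i : Fin n, HX ((T.filter (fun j => i ∈ SS j)).card) T.card := by
  unfold x3cScore
  rw [Fintype.sum_prod_type]
  refine Finset.sum_congr rfl fun i _ => ?_
  rw [Fin.sum_univ_three]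
  have hP : T ∩ Finset.univ.filter (fun j => i ∈ SS j) = T.filter (fun j => i ∈ SS j) := by
    ext j; simp
  have hPc : T ∩ (Finset.univ.filter (fun j => i ∈ SS j))ᶜ = T.filter (fun j => i ∉ SS j) := by
    ext j; simp
  have hN : T ∩ Finset.univ.filter (fun j => i ∉ SS j) = T.filter (fun j => i ∉ SS j) := by
    ext j; simp
  have hNc : T ∩ (Finset.univ.filter (fun j => i ∉ SS j))ᶜ = T.filter (fun j => i ∈ SS j) := by
    ext j; simp
  have hcard : (T.filter (fun j => i ∉ SS j)).card
      = T.card - (T.filter (fun j => i ∈ SS j)).card := by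
    have := Finset.card_filter_add_card_filter_not (s := T)
      (p := fun j => i ∈ SS j)
    omega
  simp only [x3cBallot, show ((0 : Fin 3) = 2) = False by simp,
    show ((1 : Fin 3) = 2) = False by simp, show ((2 : Fin 3) = 2) = True by simp,
    if_true, if_false, hP, hPc, hN, hNc, hcard, HX]
  ring

lemma sum_k {n : ℕ} (SS : Fin n → Finset (Fin n)) (hsize : ∀ j, (SS j).card = 3)
    (T : Finset (Fin n)) :
    ∑ i : Fin n, (T.filter (fun j => i ∈ SS j)).card = 3 * T.card := by
  have h1 : ∀ i : Fin n, (T.filter (fun j => i ∈ SS j)).card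
      = ∑ j ∈ T, if i ∈ SS j then 1 else 0 := fun i => by
    rw [Finset.card_filter]
  simp_rw [h1]
  rw [Finset.sum_comm]
  have h2 : ∀ j : Fin n, (∑ i : Fin n, if i ∈ SS j then 1 else 0) = 3 := fun j => by
    rw [Finset.sum_ite_mem, Finset.univ_inter, Finset.sum_const, hsize j]; rfl
  rw [Finset.sum_congr rfl fun j _ => h2 j, Finset.sum_const]
  ring

/-- For an X3C instance with `n > 39`, the reduced election has a committee of `(f,g)`-NAV
score at least `7n` iff the instance admits an exact cover. -/
theorem x3c_score_iff_exact_cover (n : ℕ) (hn : 39 < n)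
    (SS : Fin n → Finset (Fin n))
    (hsize : ∀ j : Fin n, (SS j).card = 3)
    (hocc : ∀ i : Fin n, (Finset.univ.filter (fun j : Fin n => i ∈ SS j)).card = 3) :
    (∃ T : Finset (Fin n), (7 * n : ℤ) ≤ x3cScore SS T)
      ↔ (∃ T : Finset (Fin n),
          ∀ i : Fin n, (T.filter (fun j : Fin n => i ∈ SS j)).card = 1) := by
  constructor
  · rintro ⟨T, hT⟩
    rw [score_eq_s15] at hT
    set k : Fin n → ℕ := fun i => (T.filter (fun j => i ∈ SS j)).card with hkdef
    have hsum : ∑ i : Fin n, k i = 3 * T.card := sum_k SS hsize T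
    have hk3 : ∀ i, k i ≤ 3 := fun i => by
      have h := Finset.card_le_card
        (Finset.filter_subset_filter (fun j => i ∈ SS j) (Finset.subset_univ T))
      rw [hocc i] at h
      exact h
    by_cases hm : T.card ≤ 4
    · -- small committee: score too small, contradiction
      exfalso
      have hc : (Finset.univ.filter (fun i : Fin n => k i ≠ 0)).card ≤ 12 := by
        have h1 : (Finset.univ.filter (fun i : Fin n => k i ≠ 0)).card
            ≤ ∑ i : Fin n, k i := by
          rw [Finset.card_eq_sum_ones]
          refine le_trans (Finset.sum_le_sum fun i hi => ?_)
            (Finset.sum_le_sum_of_subset (Finset.filter_subset _ _))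
          simp only [Finset.mem_filter] at hi
          omega
        omega
      have hb : ∑ i : Fin n, HX (k i) T.card
          ≤ ∑ i : Fin n, (2 + if k i ≠ 0 then (10 : ℤ) else 0) := by
        refine Finset.sum_le_sum fun i _ => ?_
        by_cases h0 : k i = 0
        · simp [h0, HX_zero]
        · simpa [h0] using HX_le_twelve (k i) T.card
      have hcard : ((Finset.univ.filter (fun i : Fin n => k i ≠ 0)).card : ℤ) ≤ 12 := by
        exact_mod_cast hc
      have hsplit : ∑ i : Fin n, (2 + if k i ≠ 0 then (10 : ℤ) else 0)
          = 2 * n + ((Finset.univ.filter (fun i : Fin n => k i ≠ 0)).card : ℤ) * 10 := by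
        rw [Finset.sum_add_distrib, Finset.sum_const, ← Finset.sum_filter (fun i => k i ≠ 0)
          (fun _ => (10 : ℤ)), Finset.sum_const]
        simp [nsmul_eq_mul]
        ring
      rw [hsplit] at hb
      have h7 : (7 * n : ℤ) ≤ 2 * n + 120 := by
        refine le_trans hT (le_trans hb ?_)
        linarith
      have : (40 : ℤ) ≤ n := by exact_mod_cast hn
      linarith
    · push_neg at hm
      have hm5 : 5 ≤ T.card := hm
      refine ⟨T, fun i => ?_⟩
      by_contra hne
      have hlt : ∑ i : Fin n, HX (k i) T.card < ∑ i : Fin n, (7 : ℤ) := by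
        refine Finset.sum_lt_sum (fun j _ => ?_) ⟨i, Finset.mem_univ i, ?_⟩
        · by_cases h1 : k j = 1
          · rw [h1, HX_one _ hm5]
          · linarith [HX_ne_one (k j) T.card (hk3 j) hm5 h1]
        · have := HX_ne_one (k i) T.card (hk3 i) hm5 hne
          linarith
      rw [Finset.sum_const, Finset.card_univ, Fintype.card_fin, nsmul_eq_mul] at hlt
      linarith
  · rintro ⟨T, hT⟩
    refine ⟨T, ?_⟩
    rw [score_eq_s15]
    have hsum : ∑ i : Fin n, (T.filter (fun j => i ∈ SS j)).card = 3 * T.card :=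
      sum_k SS hsize T
    have hn3 : n = 3 * T.card := by
      rw [← hsum]
      simp [hT]
    have hm5 : 5 ≤ T.card := by omega
    have : ∀ i : Fin n, HX ((T.filter (fun j => i ∈ SS j)).card) T.card = 7 := fun i => by
      rw [hT i, HX_one _ hm5]
    rw [Finset.sum_congr rfl fun i _ => this i, Finset.sum_const]
    simp [nsmul_eq_mul, mul_comm]
end

section
/- Consider an X3C instance with n > 39 and its reduced election. Every committee C ⊆ {S_1, …, S_n} with fewer than six candidates has (f,g)-NAV score strictly less than 7n. -/
open Finset

private lemma x3c_aux (a b : ℕ) :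
    (fX a - gX b) + (fX a - gX b) + (fX b - gX a) ≤ if a = 0 then 2 else 9 := by
  unfold fX gX
  split_ifs <;> omega

/-- For an X3C instance with `n > 39`, every committee with fewer than six candidates has
`(f,g)`-NAV score strictly less than `7n`. -/
theorem x3c_small_committee_score_lt (n : ℕ) (hn : 39 < n)
    (SS : Fin n → Finset (Fin n))
    (hsize : ∀ j : Fin n, (SS j).card = 3)
    (hocc : ∀ i : Fin n, (Finset.univ.filter (fun j : Fin n => i ∈ SS j)).card = 3) :
    ∀ T : Finset (Fin n), T.card < 6 → x3cScore SS T < (7 * n : ℤ) := by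
  intro T hT
  set A : Fin n → Finset (Fin n) := fun i => Finset.univ.filter (fun j => i ∈ SS j) with hA
  -- the per-element bound
  have key : ∀ i : Fin n,
      (∑ t : Fin 3, (fX ((T ∩ x3cBallot SS (i, t)).card)
          - gX ((T ∩ (x3cBallot SS (i, t))ᶜ).card)))
        ≤ if (T ∩ A i).card = 0 then 2 else 9 := by
    intro i
    have hb0 : x3cBallot SS (i, (0 : Fin 3)) = A i := by
      simp [x3cBallot, hA]
    have hb1 : x3cBallot SS (i, (1 : Fin 3)) = A i := by
      simp [x3cBallot, hA]
    have hb2 : x3cBallot SS (i, (2 : Fin 3)) = (A i)ᶜ := by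
      simp [x3cBallot, hA, Finset.compl_filter]
    rw [Fin.sum_univ_three, hb0, hb1, hb2, compl_compl]
    exact x3c_aux _ _
  -- sum of intersection sizes
  have hsum : ∑ i : Fin n, (T ∩ A i).card = 3 * T.card := by
    have h1 : ∀ i : Fin n, (T ∩ A i).card = ∑ j ∈ T, if i ∈ SS j then 1 else 0 := by
      intro i
      have : T ∩ A i = T.filter (fun j => i ∈ SS j) := by
        ext j; simp [hA]
      rw [this, Finset.card_filter]
    calc ∑ i : Fin n, (T ∩ A i).card
        = ∑ i : Fin n, ∑ j ∈ T, if i ∈ SS j then 1 else 0 := by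
          exact Finset.sum_congr rfl fun i _ => h1 i
      _ = ∑ j ∈ T, ∑ i : Fin n, if i ∈ SS j then 1 else 0 := Finset.sum_comm
      _ = ∑ j ∈ T, (SS j).card := by
          refine Finset.sum_congr rfl fun j _ => ?_
          rw [Finset.card_eq_sum_ones, Finset.sum_ite_mem]
          simp
      _ = 3 * T.card := by
          simp only [hsize]
          rw [Finset.sum_const, smul_eq_mul, mul_comm]
  -- the number of elements touched
  set k : ℕ := (Finset.univ.filter (fun i : Fin n => (T ∩ A i).card ≠ 0)).card with hk
  have hk15 : k ≤ 15 := by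
    have h1 : k ≤ ∑ i : Fin n, (T ∩ A i).card := by
      rw [hk, Finset.card_eq_sum_ones]
      calc ∑ _i ∈ Finset.univ.filter (fun i : Fin n => (T ∩ A i).card ≠ 0), 1
          ≤ ∑ i ∈ Finset.univ.filter (fun i : Fin n => (T ∩ A i).card ≠ 0), (T ∩ A i).card := by
            refine Finset.sum_le_sum fun i hi => ?_
            have := (Finset.mem_filter.mp hi).2
            omega
        _ ≤ ∑ i : Fin n, (T ∩ A i).card :=
            Finset.sum_le_sum_of_subset (Finset.filter_subset _ _)
    omega
  -- total bound
  have hscore : x3cScore SS T ≤ 2 * n + 7 * k := by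
    rw [x3cScore, Fintype.sum_prod_type]
    calc (∑ i : Fin n, ∑ t : Fin 3, (fX ((T ∩ x3cBallot SS (i, t)).card)
            - gX ((T ∩ (x3cBallot SS (i, t))ᶜ).card)))
        ≤ ∑ i : Fin n, (if (T ∩ A i).card = 0 then (2 : ℤ) else 9) :=
          Finset.sum_le_sum fun i _ => key i
      _ = ∑ i : Fin n, ((2 : ℤ) + if (T ∩ A i).card ≠ 0 then 7 else 0) := by
          refine Finset.sum_congr rfl fun i _ => ?_
          by_cases h : (T ∩ A i).card = 0 <;> simp [h]
      _ = 2 * n + 7 * k := by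
          rw [Finset.sum_add_distrib, Finset.sum_const, ← Finset.sum_filter,
            Finset.sum_const, ← hk, Finset.card_univ, Fintype.card_fin]
          push_cast
          ring
  have hk15' : (k : ℤ) ≤ 15 := by exact_mod_cast hk15
  have hn' : (40 : ℤ) ≤ (n : ℤ) := by exact_mod_cast hn
  linarith
end

section
/- Consider an X3C instance and its reduced election, and let C ⊆ {S_1, …, S_n} be a committee with at least six candidates. If the element b_i belongs to exactly one member of C, then the total contribution of the three voters v_i^1, v_i^2, v_i^3 to the (f,g)-NAV score of C, namely Σ_{v ∈ {v_i^1, v_i^2, v_i^3}} (f(|C ∩ v|) − g(|C ∩ v̄|)), equals exactly 7. -/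
open Finset

/-- The total contribution of the three voters of element `i` to the `(f,g)`-NAV score of a
committee `T`. -/
def x3cContrib {n : ℕ} (SS : Fin n → Finset (Fin n)) (T : Finset (Fin n)) (i : Fin n) : ℤ :=
  ∑ t : Fin 3,
    (fX ((T ∩ x3cBallot SS (i, t)).card) - gX ((T ∩ (x3cBallot SS (i, t))ᶜ).card))

/-- If a committee `T` has at least six candidates and element `b_i` is covered by exactly one
member of `T`, then the three voters of `b_i` contribute exactly `7` to its `(f,g)`-NAV
score. -/
theorem x3c_contrib_covered_once (n : ℕ)
    (SS : Fin n → Finset (Fin n))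
    (hsize : ∀ j : Fin n, (SS j).card = 3)
    (hocc : ∀ i : Fin n, (Finset.univ.filter (fun j : Fin n => i ∈ SS j)).card = 3)
    (T : Finset (Fin n)) (hT : 6 ≤ T.card)
    (i : Fin n) (hi : (T.filter (fun j : Fin n => i ∈ SS j)).card = 1) :
    x3cContrib SS T i = 7 := by
  classical
  have h1 : T ∩ Finset.univ.filter (fun j : Fin n => i ∈ SS j)
      = T.filter (fun j : Fin n => i ∈ SS j) := by
    ext x; simp [Finset.mem_filter]
  have h2 : T ∩ (Finset.univ.filter (fun j : Fin n => i ∈ SS j))ᶜ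
      = T.filter (fun j : Fin n => i ∉ SS j) := by
    ext x; simp [Finset.mem_filter]
  have h3 : T ∩ Finset.univ.filter (fun j : Fin n => i ∉ SS j)
      = T.filter (fun j : Fin n => i ∉ SS j) := by
    ext x; simp [Finset.mem_filter]
  have h4 : T ∩ (Finset.univ.filter (fun j : Fin n => i ∉ SS j))ᶜ
      = T.filter (fun j : Fin n => i ∈ SS j) := by
    ext x; simp [Finset.mem_filter]
  have hsum := Finset.card_filter_add_card_filter_not (s := T)
    (p := fun j : Fin n => i ∈ SS j)
  have hcard : (T.filter (fun j : Fin n => i ∉ SS j)).card = T.card - 1 := by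
    omega
  have hne0 : T.card - 1 ≠ 0 := by omega
  have hne1 : T.card - 1 ≠ 1 := by omega
  unfold x3cContrib
  rw [Fin.sum_univ_three]
  simp only [x3cBallot]
  simp only [if_neg (show (0:Fin 3) ≠ 2 by decide), if_neg (show (1:Fin 3) ≠ 2 by decide),
    if_pos (rfl : (2:Fin 3) = 2), if_true]
  rw [h1, h2, h3, h4, hi, hcard]
  simp [fX, gX, hne0, hne1]
end

section
/- Consider an X3C instance and its reduced election, and let C ⊆ {S_1, …, S_n} be a committee with at least six candidates. If the element b_i belongs to more than one member of C, then the total contribution of the three voters v_i^1, v_i^2, v_i^3 to the (f,g)-NAV score of C, namely Σ_{v ∈ {v_i^1, v_i^2, v_i^3}} (f(|C ∩ v|) − g(|C ∩ v̄|)), equals exactly 6. -/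
open Finset

/-- If a committee `T` has at least six candidates and element `b_i` is covered by more than
one member of `T`, then the three voters of `b_i` contribute exactly `6` to its `(f,g)`-NAV
score. -/
theorem x3c_contrib_covered_more (n : ℕ)
    (SS : Fin n → Finset (Fin n))
    (hsize : ∀ j : Fin n, (SS j).card = 3)
    (hocc : ∀ i : Fin n, (Finset.univ.filter (fun j : Fin n => i ∈ SS j)).card = 3)
    (T : Finset (Fin n)) (hT : 6 ≤ T.card)
    (i : Fin n) (hi : 1 < (T.filter (fun j : Fin n => i ∈ SS j)).card) :
    x3cContrib SS T i = 6 := by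
  classical
  set A := T.filter (fun j : Fin n => i ∈ SS j) with hA
  set B := T.filter (fun j : Fin n => i ∉ SS j) with hB
  have hAle : A.card ≤ 3 := by
    have h := hocc i
    have hsub : A ⊆ Finset.univ.filter (fun j : Fin n => i ∈ SS j) := by
      intro x hx
      simp only [hA, Finset.mem_filter] at hx
      simp [hx.2]
    exact h ▸ Finset.card_le_card hsub
  have hsum : A.card + B.card = T.card := by
    rw [hA, hB]
    exact Finset.card_filter_add_card_filter_not (fun j => i ∈ SS j)
  have hBge : 2 ≤ B.card := by omega
  have hAge : 2 ≤ A.card := hi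
  have e1 : ∀ t : Fin 3, t ≠ 2 → T ∩ x3cBallot SS (i, t) = A := by
    intro t ht
    ext x
    simp [x3cBallot, ht, hA, Finset.mem_filter]
  have e2 : ∀ t : Fin 3, t ≠ 2 → T ∩ (x3cBallot SS (i, t))ᶜ = B := by
    intro t ht
    ext x
    simp [x3cBallot, ht, hB, Finset.mem_filter]
  have e3 : T ∩ x3cBallot SS (i, (2 : Fin 3)) = B := by
    ext x
    simp [x3cBallot, hB, Finset.mem_filter]
  have e4 : T ∩ (x3cBallot SS (i, (2 : Fin 3)))ᶜ = A := by
    ext x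
    simp [x3cBallot, hA, Finset.mem_filter]
  have hf : ∀ m : ℕ, 2 ≤ m → fX m = 4 := by
    intro m hm; simp [fX]; omega
  have hg : ∀ m : ℕ, 2 ≤ m → gX m = 2 := by
    intro m hm
    have h0 : m ≠ 0 := by omega
    have h1 : m ≠ 1 := by omega
    simp [gX, h0, h1]
  rw [x3cContrib, Fin.sum_univ_three]
  rw [e1 0 (by decide), e2 0 (by decide), e1 1 (by decide), e2 1 (by decide), e3, e4]
  rw [hf _ hAge, hf _ hBge, hg _ hAge, hg _ hBge]
  ring
end

section
/- Consider an X3C instance and its reduced election, and let C ⊆ {S_1, …, S_n} be a nonempty committee with at least two candidates. If the element b_i belongs to no member of C, then the total contribution of the three voters v_i^1, v_i^2, v_i^3 to the (f,g)-NAV score of C, namely Σ_{v ∈ {v_i^1, v_i^2, v_i^3}} (f(|C ∩ v|) − g(|C ∩ v̄|)), is at most 0. -/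
open Finset

/-- If a nonempty committee `T` has at least two candidates and element `b_i` is covered by no
member of `T`, then the three voters of `b_i` contribute at most `0` to its `(f,g)`-NAV
score. -/
theorem x3c_contrib_uncovered (n : ℕ)
    (SS : Fin n → Finset (Fin n))
    (hsize : ∀ j : Fin n, (SS j).card = 3)
    (hocc : ∀ i : Fin n, (Finset.univ.filter (fun j : Fin n => i ∈ SS j)).card = 3)
    (T : Finset (Fin n)) (hT : T.Nonempty) (hT2 : 2 ≤ T.card)
    (i : Fin n) (hi : (T.filter (fun j : Fin n => i ∈ SS j)).card = 0) :
    x3cContrib SS T i ≤ 0 := by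

  have hi' : T.filter (fun j : Fin n => i ∈ SS j) = ∅ := Finset.card_eq_zero.mp hi
  have hA : T ∩ Finset.univ.filter (fun j => i ∈ SS j) = ∅ := by
    rw [← hi']
    ext j
    simp [Finset.mem_inter, Finset.mem_filter]
  have hB : T ∩ Finset.univ.filter (fun j => i ∉ SS j) = T := by
    ext j
    simp only [Finset.mem_inter, Finset.mem_filter, Finset.mem_univ, true_and,
      and_iff_left_iff_imp]
    intro hj hjS
    have : j ∈ T ∩ Finset.univ.filter (fun j => i ∈ SS j) := by
      simp [hj, hjS]
    simp [hA] at this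
  have hcompl : (Finset.univ.filter (fun j : Fin n => i ∈ SS j))ᶜ
      = Finset.univ.filter (fun j => i ∉ SS j) := by
    ext j; simp
  have hcompl' : (Finset.univ.filter (fun j : Fin n => i ∉ SS j))ᶜ
      = Finset.univ.filter (fun j => i ∈ SS j) := by
    ext j; simp
  have hTc : T.card ≠ 0 := by omega
  have hTc1 : T.card ≠ 1 := by omega
  unfold x3cContrib x3cBallot
  rw [Fin.sum_univ_three]
  simp only [show (0 : Fin 3) ≠ 2 by decide, show (1 : Fin 3) ≠ 2 by decide,
    if_neg, if_pos rfl]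
  norm_num [hcompl, hcompl', hA, hB, fX, gX, hTc, hTc1]
end
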